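/- Let X be a two-dimensional real Banach space and v₁, v₂ ∈ S_X, and suppose x ∈ S_X satisfies F(x, ε) = K ∪ (−K) with K the normal cone determined by v₁, v₂, as constructed in the paper (so inf_λ ‖x + λv₁‖ = inf_λ ‖x + λv₂‖ = √(1−ε²)). If ε ∈ (0,1) and z ∈ S_X lies in the relative interior of K (i.e., z is a positive multiple of (1−t)v₁ + tv₂ for some t ∈ (0,1) with z not parallel to v₁ or v₂), then inf_{λ∈ℝ} ‖x + λz‖ > √(1−ε²). -/

import Mathlib

private lemma norm_line_convex {E : Type*} [NormedAddCommGroup E] [NormedSpace ℝ E]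
    (p d : E) {a b c : ℝ} (hab : a < b) (hbc : b < c) :
    ‖p + b • d‖ ≤ ((c - b)/(c - a)) * ‖p + a • d‖ + ((b - a)/(c - a)) * ‖p + c • d‖ := by
  have hca : (0:ℝ) < c - a := by linarith
  have h1 : p + b • d = ((c - b)/(c - a)) • (p + a • d) + ((b - a)/(c - a)) • (p + c • d) := by
    match_scalars
    · field_simp; ring
    · field_simp; ring
  calc ‖p + b • d‖ = ‖((c - b)/(c - a)) • (p + a • d) + ((b - a)/(c - a)) • (p + c • d)‖ := by rw [← h1]
    _ ≤ ‖((c - b)/(c - a)) • (p + a • d)‖ + ‖((b - a)/(c - a)) • (p + c • d)‖ := norm_add_le _ _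
    _ = ((c - b)/(c - a)) * ‖p + a • d‖ + ((b - a)/(c - a)) * ‖p + c • d‖ := by
        rw [norm_smul, norm_smul, Real.norm_eq_abs, Real.norm_eq_abs,
          abs_of_pos (div_pos (by linarith) hca), abs_of_pos (div_pos (by linarith) hca)]

private lemma strict_between {E : Type*} [NormedAddCommGroup E] [NormedSpace ℝ E]
    (p d : E) {a b c : ℝ} (hab : a < b) (hbc : b < c)
    (hb : 1 ≤ ‖p + b • d‖) (ha : ‖p + a • d‖ ≤ 1) (hc : ‖p + c • d‖ ≤ 1)
    (hstrict : ‖p + a • d‖ < 1 ∨ ‖p + c • d‖ < 1) : False := by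
  have key := norm_line_convex p d hab hbc
  have hca : (0:ℝ) < c - a := by linarith
  have h1 : (0:ℝ) < (c - b)/(c - a) := div_pos (by linarith) hca
  have h2 : (0:ℝ) < (b - a)/(c - a) := div_pos (by linarith) hca
  have h3 : (c - b)/(c - a) + (b - a)/(c - a) = 1 := by field_simp; ring
  rcases hstrict with h | h
  · nlinarith
  · nlinarith

private lemma three_on_line {E : Type*} [NormedAddCommGroup E] [NormedSpace ℝ E] (p d : E)
    {u v w s : ℝ} (huv : u ≠ v) (huw : u ≠ w) (hvw : v ≠ w)
    (hu : ‖p + u • d‖ = 1) (hv : ‖p + v • d‖ = 1) (hw : ‖p + w • d‖ = 1)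
    (hs : ‖p + s • d‖ < 1) : False := by
  have pair : ∀ a b : ℝ, a ≠ b → ‖p + a • d‖ = 1 → ‖p + b • d‖ = 1 →
      ((s < a ∧ s < b) ∨ (a < s ∧ b < s)) → False := by
    intro a b hab ha hb hside
    rcases hside with ⟨h1, h2⟩ | ⟨h1, h2⟩
    · rcases hab.lt_or_gt with h | h
      · exact strict_between p d h1 h (le_of_eq ha.symm) (le_of_lt hs) (le_of_eq hb) (Or.inl hs)
      · exact strict_between p d h2 h (le_of_eq hb.symm) (le_of_lt hs) (le_of_eq ha) (Or.inl hs)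
    · rcases hab.lt_or_gt with h | h
      · exact strict_between p d h h2 (le_of_eq hb.symm) (le_of_eq ha) (le_of_lt hs) (Or.inr hs)
      · exact strict_between p d h h1 (le_of_eq ha.symm) (le_of_eq hb) (le_of_lt hs) (Or.inr hs)
  have hsu : s ≠ u := by intro h; rw [h, hu] at hs; exact lt_irrefl 1 hs
  have hsv : s ≠ v := by intro h; rw [h, hv] at hs; exact lt_irrefl 1 hs
  have hsw : s ≠ w := by intro h; rw [h, hw] at hs; exact lt_irrefl 1 hs
  rcases hsu.lt_or_gt with h1 | h1 <;> rcases hsv.lt_or_gt with h2 | h2 <;>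
    rcases hsw.lt_or_gt with h3 | h3
  · exact pair u v huv hu hv (Or.inl ⟨h1, h2⟩)
  · exact pair u v huv hu hv (Or.inl ⟨h1, h2⟩)
  · exact pair u w huw hu hw (Or.inl ⟨h1, h3⟩)
  · exact pair v w hvw hv hw (Or.inr ⟨h2, h3⟩)
  · exact pair v w hvw hv hw (Or.inl ⟨h2, h3⟩)
  · exact pair u w huw hu hw (Or.inr ⟨h1, h3⟩)
  · exact pair u v huv hu hv (Or.inr ⟨h1, h2⟩)
  · exact pair u v huv hu hv (Or.inr ⟨h1, h2⟩)


private lemma indep_of_lb {X : Type*} [NormedAddCommGroup X] [NormedSpace ℝ X]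
    (x y : X) {r : ℝ} (hr0 : 0 < r) (hy : y ≠ 0)
    (lb : ∀ l : ℝ, r ≤ ‖x + l • y‖) : LinearIndependent ℝ ![x, y] := by
  rw [LinearIndependent.pair_iff]
  intro s t hst
  by_cases hs : s = 0
  · subst hs
    refine ⟨rfl, ?_⟩
    simp only [zero_smul, zero_add] at hst
    exact (smul_eq_zero.mp hst).resolve_right hy
  · exfalso
    have h0 : x + (t/s) • y = 0 := by
      have := congrArg (fun w => (s⁻¹ : ℝ) • w) hst
      simpa [smul_add, smul_smul, inv_mul_cancel₀ hs, div_eq_inv_mul] using this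
    have := lb (t/s)
    rw [h0, norm_zero] at this
    linarith

private lemma exists_functional {X : Type*} [NormedAddCommGroup X] [NormedSpace ℝ X]
    [FiniteDimensional ℝ X] (hdim : Module.finrank ℝ X = 2)
    (x y : X) {r : ℝ} (hr0 : 0 < r) (hy : y ≠ 0)
    (lb : ∀ l : ℝ, r ≤ ‖x + l • y‖) (contact : ∃ l : ℝ, ‖x + l • y‖ = r) :
    ∃ f : X →L[ℝ] ℝ, ‖f‖ = 1 ∧ f x = r ∧ f y = 0 := by
  have hli : LinearIndependent ℝ ![x, y] := indep_of_lb x y hr0 hy lb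
  have hcard : Fintype.card (Fin 2) = Module.finrank ℝ X := by simp [hdim]
  let B := basisOfLinearIndependentOfCardEqFinrank hli hcard
  have hB : ∀ i, B i = ![x, y] i := fun i => by
    simp [B, coe_basisOfLinearIndependentOfCardEqFinrank]
  have hB0 : B 0 = x := hB 0
  have hB1 : B 1 = y := hB 1
  let f₀ : X →ₗ[ℝ] ℝ := B.constr ℝ ![r, 0]
  have hf₀x : f₀ x = r := by
    rw [← hB0]; simpa [f₀] using B.constr_basis ℝ ![r, 0] 0
  have hf₀y : f₀ y = 0 := by
    rw [← hB1]; simpa [f₀] using B.constr_basis ℝ ![r, 0] 1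
  have hbound : ∀ w : X, |f₀ w| ≤ ‖w‖ := by
    intro w
    have hrepr : w = B.repr w 0 • x + B.repr w 1 • y := by
      conv_lhs => rw [← B.sum_repr w]
      rw [Fin.sum_univ_two, hB0, hB1]
    have hfw : f₀ w = B.repr w 0 * r := by
      conv_lhs => rw [hrepr]
      simp [map_add, map_smul, hf₀x, hf₀y]
    by_cases ha : B.repr w 0 = 0
    · rw [hfw, ha]; simp
    · have hw2 : w = (B.repr w 0) • (x + (B.repr w 1 / B.repr w 0) • y) := by
        rw [smul_add, smul_smul, mul_div_cancel₀ _ ha]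
        exact hrepr
      have hnw : ‖w‖ = |B.repr w 0| * ‖x + (B.repr w 1 / B.repr w 0) • y‖ := by
        rw [congrArg norm hw2, norm_smul, Real.norm_eq_abs]
      rw [hfw, hnw, abs_mul]
      have h1 : |r| ≤ ‖x + (B.repr w 1 / B.repr w 0) • y‖ := by
        rw [abs_of_pos hr0]; exact lb _
      exact mul_le_mul_of_nonneg_left h1 (abs_nonneg _)
  let f : X →L[ℝ] ℝ := LinearMap.toContinuousLinearMap f₀
  have hfx : f x = r := hf₀x
  have hfy : f y = 0 := hf₀y
  have hle : ‖f‖ ≤ 1 := f.opNorm_le_bound zero_le_one (by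
    intro w; rw [one_mul]; exact hbound w)
  obtain ⟨l₀, hl₀⟩ := contact
  have hfp : f (x + l₀ • y) = r := by
    rw [map_add, map_smul, hfx, hfy]; simp
  have hge : 1 ≤ ‖f‖ := by
    have := f.le_opNorm (x + l₀ • y)
    rw [hfp, hl₀] at this
    have : r ≤ ‖f‖ * r := by simpa [Real.norm_eq_abs, abs_of_pos hr0] using this
    nlinarith
  exact ⟨f, le_antisymm hle hge, hfx, hfy⟩


private lemma attain {X : Type*} [NormedAddCommGroup X] [NormedSpace ℝ X]
    (x y : X) (hx : ‖x‖ = 1) (hy : ‖y‖ = 1) {r : ℝ} (hr1 : r < 1)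
    (lb : ∀ l : ℝ, r ≤ ‖x + l • y‖) (hinf : (⨅ l : ℝ, ‖x + l • y‖) = r) :
    ∃ l : ℝ, ‖x + l • y‖ = r := by
  have hcont : ContinuousOn (fun l : ℝ => ‖x + l • y‖) (Set.Icc (-2) 2) :=
    (Continuous.norm (by continuity)).continuousOn
  obtain ⟨l₀, hl₀mem, hmin⟩ := (isCompact_Icc (a := (-2:ℝ)) (b := 2)).exists_isMinOn
    (Set.nonempty_Icc.mpr (by norm_num)) hcont
  refine ⟨l₀, le_antisymm ?_ (lb l₀)⟩
  by_contra hgt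
  push_neg at hgt
  have hlow : ∀ l : ℝ, min ‖x + l₀ • y‖ 1 ≤ ‖x + l • y‖ := by
    intro l
    by_cases hmem : l ∈ Set.Icc (-2:ℝ) 2
    · exact le_trans (min_le_left _ _) (hmin hmem)
    · have habs : 2 < |l| := by
        simp only [Set.mem_Icc, not_and_or, not_le] at hmem
        rcases hmem with h | h
        · rw [abs_of_neg (by linarith)]; linarith
        · rw [abs_of_pos (by linarith)]; linarith
      have h1 : ‖l • y‖ ≤ ‖x + l • y‖ + ‖x‖ := by
        calc ‖l • y‖ = ‖(x + l • y) - x‖ := by rw [add_sub_cancel_left]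
          _ ≤ ‖x + l • y‖ + ‖x‖ := norm_sub_le _ _
      rw [norm_smul, Real.norm_eq_abs, hy, mul_one, hx] at h1
      calc min ‖x + l₀ • y‖ 1 ≤ 1 := min_le_right _ _
        _ ≤ ‖x + l • y‖ := by linarith
  have : min ‖x + l₀ • y‖ 1 ≤ r := hinf ▸ le_ciInf hlow
  have : r < min ‖x + l₀ • y‖ 1 := lt_min hgt hr1
  linarith

set_option maxHeartbeats 1600000 in
theorem interior_cone_strict_inequality {X : Type*} [NormedAddCommGroup X] [NormedSpace ℝ X]
    [FiniteDimensional ℝ X] (hdim : Module.finrank ℝ X = 2)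
    (x v₁ v₂ : X) (hx : ‖x‖ = 1) (hv₁ : ‖v₁‖ = 1) (hv₂ : ‖v₂‖ = 1)
    (ε : ℝ) (hε0 : 0 < ε) (hε1 : ε < 1)
    (hF : {y : X | ∀ l : ℝ, ‖x + l • y‖ ≥ Real.sqrt (1 - ε ^ 2)} =
        {w : X | ∃ α β : ℝ, 0 ≤ α ∧ 0 ≤ β ∧ w = α • v₁ + β • v₂} ∪
          -{w : X | ∃ α β : ℝ, 0 ≤ α ∧ 0 ≤ β ∧ w = α • v₁ + β • v₂})
    (hinf₁ : (⨅ l : ℝ, ‖x + l • v₁‖) = Real.sqrt (1 - ε ^ 2))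
    (hinf₂ : (⨅ l : ℝ, ‖x + l • v₂‖) = Real.sqrt (1 - ε ^ 2))
    (z : X) (hz : ‖z‖ = 1)
    (hzK : ∃ c t : ℝ, 0 < c ∧ 0 < t ∧ t < 1 ∧ z = c • ((1 - t) • v₁ + t • v₂))
    (hz₁ : ∀ a : ℝ, z ≠ a • v₁) (hz₂ : ∀ a : ℝ, z ≠ a • v₂) :
    (⨅ l : ℝ, ‖x + l • z‖) > Real.sqrt (1 - ε ^ 2) := by
  obtain ⟨c₀, t₀, hc₀, ht₀, ht₀1, hz_eq⟩ := hzK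
  set r : ℝ := Real.sqrt (1 - ε ^ 2) with hr_def
  have hεsq : 0 < 1 - ε ^ 2 := by nlinarith
  have hr0 : 0 < r := Real.sqrt_pos.mpr hεsq
  have hrsq : r ^ 2 = 1 - ε ^ 2 := Real.sq_sqrt (le_of_lt hεsq)
  have hr1 : r < 1 := by nlinarith
  -- nonzero vectors
  have hxne : x ≠ 0 := by intro h; rw [h, norm_zero] at hx; norm_num at hx
  have hv₁ne : v₁ ≠ 0 := by intro h; rw [h, norm_zero] at hv₁; norm_num at hv₁
  have hv₂ne : v₂ ≠ 0 := by intro h; rw [h, norm_zero] at hv₂; norm_num at hv₂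
  have hzne : z ≠ 0 := by intro h; rw [h, norm_zero] at hz; norm_num at hz
  -- expansion of z
  have hz_expand : z = (c₀ * (1 - t₀)) • v₁ + (c₀ * t₀) • v₂ := by
    rw [hz_eq]; module
  -- lower bounds from hF
  have lb₁ : ∀ l : ℝ, r ≤ ‖x + l • v₁‖ := by
    have : v₁ ∈ {y : X | ∀ l : ℝ, ‖x + l • y‖ ≥ r} := by
      rw [hF]; left; exact ⟨1, 0, zero_le_one, le_refl 0, by simp⟩
    exact this
  have lb₂ : ∀ l : ℝ, r ≤ ‖x + l • v₂‖ := by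
    have : v₂ ∈ {y : X | ∀ l : ℝ, ‖x + l • y‖ ≥ r} := by
      rw [hF]; left; exact ⟨0, 1, le_refl 0, zero_le_one, by simp⟩
    exact this
  have lbz : ∀ l : ℝ, r ≤ ‖x + l • z‖ := by
    have : z ∈ {y : X | ∀ l : ℝ, ‖x + l • y‖ ≥ r} := by
      rw [hF]; left
      exact ⟨c₀ * (1 - t₀), c₀ * t₀, by nlinarith, by positivity, hz_expand⟩
    exact this
  -- by contradiction
  by_contra hcon
  push_neg at hcon
  have hinfz : (⨅ l : ℝ, ‖x + l • z‖) = r := le_antisymm hcon (le_ciInf lbz)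
  -- contacts and functionals
  obtain ⟨f₁, hf₁n, hf₁x, hf₁v₁⟩ := exists_functional hdim x v₁ hr0 hv₁ne lb₁
    (attain x v₁ hx hv₁ hr1 lb₁ hinf₁)
  obtain ⟨f₂, hf₂n, hf₂x, hf₂v₂⟩ := exists_functional hdim x v₂ hr0 hv₂ne lb₂
    (attain x v₂ hx hv₂ hr1 lb₂ hinf₂)
  obtain ⟨fz, hfzn, hfzx, hfzz⟩ := exists_functional hdim x z hr0 hzne lbz
    (attain x z hx hz hr1 lbz hinfz)
  -- independence of v₁, v₂
  have hind : LinearIndependent ℝ ![v₁, v₂] := by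
    rw [LinearIndependent.pair_iff]
    intro s t hst
    by_cases ht : t = 0
    · subst ht
      simp only [zero_smul, add_zero] at hst
      exact ⟨(smul_eq_zero.mp hst).resolve_right hv₁ne, rfl⟩
    · exfalso
      have h2 : t • v₂ = (-s) • v₁ := by
        rw [neg_smul]; exact eq_neg_of_add_eq_zero_right hst
      have key : z = (c₀ * (1 - t₀)) • v₁ + ((c₀ * t₀) / t) • (t • v₂) := by
        rw [hz_eq]; match_scalars
        · ring
        · field_simp
      rw [h2] at key
      exact hz₁ (c₀ * (1 - t₀) + ((c₀ * t₀) / t) * (-s)) (by rw [key]; module)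
  have hcard : Fintype.card (Fin 2) = Module.finrank ℝ X := by simp [hdim]
  let B₁₂ := basisOfLinearIndependentOfCardEqFinrank hind hcard
  have hB₁₂0 : B₁₂ 0 = v₁ := by simp [B₁₂, coe_basisOfLinearIndependentOfCardEqFinrank]
  have hB₁₂1 : B₁₂ 1 = v₂ := by simp [B₁₂, coe_basisOfLinearIndependentOfCardEqFinrank]
  have eval_zero : ∀ f : X →L[ℝ] ℝ, f v₁ = 0 → f v₂ = 0 → f x = 0 := by
    intro f h1 h2
    have hx_repr : x = B₁₂.repr x 0 • v₁ + B₁₂.repr x 1 • v₂ := by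
      conv_lhs => rw [← B₁₂.sum_repr x]
      rw [Fin.sum_univ_two, hB₁₂0, hB₁₂1]
    rw [congrArg f hx_repr, map_add, map_smul, map_smul, h1, h2]
    simp
  have hf₁v₂ : f₁ v₂ ≠ 0 := by
    intro h0
    have := eval_zero f₁ hf₁v₁ h0
    rw [hf₁x] at this; linarith
  have hf₂v₁ : f₂ v₁ ≠ 0 := by
    intro h0
    have := eval_zero f₂ h0 hf₂v₂
    rw [hf₂x] at this; linarith
  -- values on z
  have hf₁z : f₁ z = (c₀ * t₀) * f₁ v₂ := by
    rw [congrArg f₁ hz_expand, map_add, map_smul, map_smul, hf₁v₁]; simp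
  have hf₂z : f₂ z = (c₀ * (1 - t₀)) * f₂ v₁ := by
    rw [congrArg f₂ hz_expand, map_add, map_smul, map_smul, hf₂v₂]; simp
  have hf₁z_ne : f₁ z ≠ 0 := by
    rw [hf₁z]; exact mul_ne_zero (by positivity) hf₁v₂
  have hf₂z_ne : f₂ z ≠ 0 := by
    rw [hf₂z]; exact mul_ne_zero (by nlinarith) hf₂v₁
  have hfz_ne_f₁ : fz ≠ f₁ := fun h => hf₁z_ne (by rw [← h, hfzz])
  have hfz_ne_f₂ : fz ≠ f₂ := fun h => hf₂z_ne (by rw [← h, hfzz])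
  have hf₁_ne_f₂ : f₁ ≠ f₂ := fun h => hf₁v₂ (by rw [h, hf₂v₂])
  -- norming functional
  obtain ⟨g, hgn, hgx⟩ := exists_dual_vector ℝ x (norm_ne_zero_iff.mpr hxne)
  set g₀ : X →L[ℝ] ℝ := r • g with hg₀_def
  have hg₀x : g₀ x = r := by
    rw [hg₀_def]; simp [hgx, hx]
  have hg₀n : ‖g₀‖ = r := by
    have : ‖g₀‖ = ‖r‖ * ‖g‖ := norm_smul r g
    rw [this, Real.norm_eq_abs, abs_of_pos hr0, hgn, mul_one]
  -- basis x, v₁ and parallelity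
  have hindx : LinearIndependent ℝ ![x, v₁] := indep_of_lb x v₁ hr0 hv₁ne lb₁
  let Bx := basisOfLinearIndependentOfCardEqFinrank hindx hcard
  have hBx0 : Bx 0 = x := by simp [Bx, coe_basisOfLinearIndependentOfCardEqFinrank]
  have hBx1 : Bx 1 = v₁ := by simp [Bx, coe_basisOfLinearIndependentOfCardEqFinrank]
  set d : X →L[ℝ] ℝ := f₂ - f₁ with hd_def
  have hdx : d x = 0 := by rw [hd_def]; simp [hf₁x, hf₂x]
  have hdv₁ : d v₁ = f₂ v₁ := by rw [hd_def]; simp [hf₁v₁]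
  have hpar : ∀ φ : X →L[ℝ] ℝ, φ x = 0 → φ = (φ v₁ / f₂ v₁) • d := by
    intro φ hφx
    apply ContinuousLinearMap.coe_injective
    apply Bx.ext
    intro i
    fin_cases i <;>
      simp only [Fin.zero_eta, Fin.mk_one, hBx0, hBx1, ContinuousLinearMap.coe_coe]
    · rw [hφx, ContinuousLinearMap.smul_apply, hdx, smul_zero]
    · rw [ContinuousLinearMap.smul_apply, hdv₁, smul_eq_mul, div_mul_cancel₀ _ hf₂v₁]
  -- express fz and g₀ on the line through f₁ with direction d
  have hφz : fz - f₁ = (((fz - f₁) v₁) / f₂ v₁) • d := hpar (fz - f₁) (by simp [hfzx, hf₁x])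
  have hφg : g₀ - f₁ = (((g₀ - f₁) v₁) / f₂ v₁) • d := hpar (g₀ - f₁) (by simp [hg₀x, hf₁x])
  set sz : ℝ := ((fz - f₁) v₁) / f₂ v₁ with hsz_def
  set s₀ : ℝ := ((g₀ - f₁) v₁) / f₂ v₁ with hs₀_def
  have hfz_line : fz = f₁ + sz • d := by rw [← hφz]; abel
  have hg₀_line : g₀ = f₁ + s₀ • d := by rw [← hφg]; abel
  have hsz0 : (0 : ℝ) ≠ sz := by
    intro h
    apply hfz_ne_f₁
    rw [hfz_line, ← h, zero_smul, add_zero]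
  have hsz1 : (1 : ℝ) ≠ sz := by
    intro h
    apply hfz_ne_f₂
    rw [hfz_line, ← h, one_smul, hd_def]; abel
  -- norms on the line
  have n0 : ‖f₁ + (0 : ℝ) • d‖ = 1 := by rw [zero_smul, add_zero, hf₁n]
  have n1 : ‖f₁ + (1 : ℝ) • d‖ = 1 := by
    rw [one_smul, hd_def]
    have : f₁ + (f₂ - f₁) = f₂ := by abel
    rw [this, hf₂n]
  have nz : ‖f₁ + sz • d‖ = 1 := by rw [← hfz_line, hfzn]
  have ns : ‖f₁ + s₀ • d‖ < 1 := by rw [← hg₀_line, hg₀n]; exact hr1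
  exact three_on_line f₁ d (by norm_num) hsz0 hsz1 n0 n1 nz ns
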